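/- Theorem 2 (second bound). In the same setting, if H(q_1) ≤ H(q_2), then ℒ_{q_2} ≤ ℒ_{q_1} + D(q_1‖q_2) + D(q_1‖q̄_2). -/

import Mathlib

open Finset Real

/-- Theorem 2, second bound: if `H(q1) ≤ H(q2)` then
`ℒ_{q2} ≤ ℒ_{q1} + D(q1‖q2) + D(q1‖q̄2)`. -/
theorem theorem2_second_bound {X : Type*} [Fintype X] [Nonempty X]
    {R : Type*} [Fintype R] [DecidableEq R] (α : R → X → ℝ) (hα : ∀ r x, 0 < α r x)
    (T1 T2 : Finset R) (Z1 Z2 Z2bar : ℝ) (q1 q2 q2bar : X → ℝ)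
    (hZ1 : Z1 = ∑ x, ∏ r ∈ T1, α r x)
    (hZ2 : Z2 = ∑ x, ∏ r ∈ T2, α r x)
    (hZ2bar : Z2bar = ∑ x, ∏ r ∈ T2ᶜ, α r x)
    (hq1 : ∀ x, q1 x = (∏ r ∈ T1, α r x) / Z1)
    (hq2 : ∀ x, q2 x = (∏ r ∈ T2, α r x) / Z2)
    (hq2bar : ∀ x, q2bar x = (∏ r ∈ T2ᶜ, α r x) / Z2bar)
    (hH : (-∑ x, q1 x * Real.log (q1 x)) ≤ -∑ x, q2 x * Real.log (q2 x)) :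
    Real.log Z2 + ∑ r ∈ T2ᶜ, ∑ x, q2 x * Real.log (α r x)
      ≤ (Real.log Z1 + ∑ r ∈ T1ᶜ, ∑ x, q1 x * Real.log (α r x))
        + (∑ x, q1 x * Real.log (q1 x / q2 x))
        + ∑ x, q1 x * Real.log (q1 x / q2bar x) := by
  have hP1 : ∀ x, 0 < ∏ r ∈ T1, α r x := fun x => Finset.prod_pos fun r _ => hα r x
  have hP2 : ∀ x, 0 < ∏ r ∈ T2, α r x := fun x => Finset.prod_pos fun r _ => hα r x
  have hP1' : ∀ x, 0 < ∏ r ∈ T1ᶜ, α r x := fun x => Finset.prod_pos fun r _ => hα r x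
  have hP2' : ∀ x, 0 < ∏ r ∈ T2ᶜ, α r x := fun x => Finset.prod_pos fun r _ => hα r x
  have hZ1pos : 0 < Z1 := by
    rw [hZ1]; exact Finset.sum_pos (fun x _ => hP1 x) Finset.univ_nonempty
  have hZ2pos : 0 < Z2 := by
    rw [hZ2]; exact Finset.sum_pos (fun x _ => hP2 x) Finset.univ_nonempty
  have hZ2barpos : 0 < Z2bar := by
    rw [hZ2bar]; exact Finset.sum_pos (fun x _ => hP2' x) Finset.univ_nonempty
  have hq1pos : ∀ x, 0 < q1 x := fun x => by rw [hq1]; exact div_pos (hP1 x) hZ1pos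
  have hq2pos : ∀ x, 0 < q2 x := fun x => by rw [hq2]; exact div_pos (hP2 x) hZ2pos
  have hq2barpos : ∀ x, 0 < q2bar x := fun x => by
    rw [hq2bar]; exact div_pos (hP2' x) hZ2barpos
  have hq1sum : ∑ x, q1 x = 1 := by
    simp only [hq1]; rw [← Finset.sum_div, ← hZ1, div_self hZ1pos.ne']
  have hq2sum : ∑ x, q2 x = 1 := by
    simp only [hq2]; rw [← Finset.sum_div, ← hZ2, div_self hZ2pos.ne']
  have hq2barsum : ∑ x, q2bar x = 1 := by
    simp only [hq2bar]; rw [← Finset.sum_div, ← hZ2bar, div_self hZ2barpos.ne']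
  have hlogq1 : ∀ x, Real.log (q1 x) = Real.log (∏ r ∈ T1, α r x) - Real.log Z1 :=
    fun x => by rw [hq1, Real.log_div (hP1 x).ne' hZ1pos.ne']
  have hlogq2 : ∀ x, Real.log (q2 x) = Real.log (∏ r ∈ T2, α r x) - Real.log Z2 :=
    fun x => by rw [hq2, Real.log_div (hP2 x).ne' hZ2pos.ne']
  have hlogq2bar : ∀ x, Real.log (q2bar x) = Real.log (∏ r ∈ T2ᶜ, α r x) - Real.log Z2bar :=
    fun x => by rw [hq2bar, Real.log_div (hP2' x).ne' hZ2barpos.ne']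
  have hcons : ∀ x, Real.log (∏ r ∈ T1, α r x) + Real.log (∏ r ∈ T1ᶜ, α r x)
      = Real.log (∏ r ∈ T2, α r x) + Real.log (∏ r ∈ T2ᶜ, α r x) := by
    intro x
    rw [← Real.log_mul (hP1 x).ne' (hP1' x).ne', ← Real.log_mul (hP2 x).ne' (hP2' x).ne',
      Finset.prod_mul_prod_compl, Finset.prod_mul_prod_compl]
  -- swap sums
  have e1 : ∑ r ∈ T2ᶜ, ∑ x, q2 x * Real.log (α r x)
      = ∑ x, q2 x * Real.log (∏ r ∈ T2ᶜ, α r x) := by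
    rw [Finset.sum_comm]
    refine Finset.sum_congr rfl fun x _ => ?_
    rw [Real.log_prod (fun r _ => (hα r x).ne'), Finset.mul_sum]
  have e2 : ∑ r ∈ T1ᶜ, ∑ x, q1 x * Real.log (α r x)
      = ∑ x, q1 x * Real.log (∏ r ∈ T1ᶜ, α r x) := by
    rw [Finset.sum_comm]
    refine Finset.sum_congr rfl fun x _ => ?_
    rw [Real.log_prod (fun r _ => (hα r x).ne'), Finset.mul_sum]
  -- KL-type expansions
  have e3 : ∑ x, q1 x * Real.log (q1 x / q2 x)
      = ∑ x, (q1 x * Real.log (∏ r ∈ T1, α r x) - q1 x * Real.log (∏ r ∈ T2, α r x))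
        + (Real.log Z2 - Real.log Z1) := by
    have hpt : ∀ x, q1 x * Real.log (q1 x / q2 x)
        = (q1 x * Real.log (∏ r ∈ T1, α r x) - q1 x * Real.log (∏ r ∈ T2, α r x))
          + q1 x * (Real.log Z2 - Real.log Z1) := fun x => by
      rw [Real.log_div (hq1pos x).ne' (hq2pos x).ne', hlogq1, hlogq2]; ring
    rw [Finset.sum_congr rfl fun x _ => hpt x, Finset.sum_add_distrib,
      ← Finset.sum_mul, hq1sum, one_mul]
  have e4 : ∑ x, q1 x * Real.log (q1 x / q2bar x)
      = ∑ x, (q1 x * Real.log (∏ r ∈ T1, α r x) - q1 x * Real.log (∏ r ∈ T2ᶜ, α r x))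
        + (Real.log Z2bar - Real.log Z1) := by
    have hpt : ∀ x, q1 x * Real.log (q1 x / q2bar x)
        = (q1 x * Real.log (∏ r ∈ T1, α r x) - q1 x * Real.log (∏ r ∈ T2ᶜ, α r x))
          + q1 x * (Real.log Z2bar - Real.log Z1) := fun x => by
      rw [Real.log_div (hq1pos x).ne' (hq2barpos x).ne', hlogq1, hlogq2bar]; ring
    rw [Finset.sum_congr rfl fun x _ => hpt x, Finset.sum_add_distrib,
      ← Finset.sum_mul, hq1sum, one_mul]
  have e3' : ∑ x, (q1 x * Real.log (∏ r ∈ T1, α r x) - q1 x * Real.log (∏ r ∈ T2, α r x))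
      = (∑ x, q1 x * Real.log (∏ r ∈ T1, α r x))
        - ∑ x, q1 x * Real.log (∏ r ∈ T2, α r x) := Finset.sum_sub_distrib _ _
  have e4' : ∑ x, (q1 x * Real.log (∏ r ∈ T1, α r x) - q1 x * Real.log (∏ r ∈ T2ᶜ, α r x))
      = (∑ x, q1 x * Real.log (∏ r ∈ T1, α r x))
        - ∑ x, q1 x * Real.log (∏ r ∈ T2ᶜ, α r x) := Finset.sum_sub_distrib _ _
  -- conservation summed against q1
  have e5 : (∑ x, q1 x * Real.log (∏ r ∈ T1, α r x))
        + ∑ x, q1 x * Real.log (∏ r ∈ T1ᶜ, α r x)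
      = (∑ x, q1 x * Real.log (∏ r ∈ T2, α r x))
        + ∑ x, q1 x * Real.log (∏ r ∈ T2ᶜ, α r x) := by
    rw [← Finset.sum_add_distrib, ← Finset.sum_add_distrib]
    exact Finset.sum_congr rfl fun x _ => by rw [← mul_add, ← mul_add, hcons x]
  -- entropies in terms of products
  have e6 : ∑ x, q1 x * Real.log (q1 x)
      = (∑ x, q1 x * Real.log (∏ r ∈ T1, α r x)) - Real.log Z1 := by
    have hpt : ∀ x, q1 x * Real.log (q1 x)
        = q1 x * Real.log (∏ r ∈ T1, α r x) - q1 x * Real.log Z1 := fun x => by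
      rw [hlogq1 x]; ring
    rw [Finset.sum_congr rfl fun x _ => hpt x, Finset.sum_sub_distrib,
      ← Finset.sum_mul, hq1sum, one_mul]
  have e7 : ∑ x, q2 x * Real.log (q2bar x)
      = (∑ x, q2 x * Real.log (∏ r ∈ T2ᶜ, α r x)) - Real.log Z2bar := by
    have hpt : ∀ x, q2 x * Real.log (q2bar x)
        = q2 x * Real.log (∏ r ∈ T2ᶜ, α r x) - q2 x * Real.log Z2bar := fun x => by
      rw [hlogq2bar x]; ring
    rw [Finset.sum_congr rfl fun x _ => hpt x, Finset.sum_sub_distrib,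
      ← Finset.sum_mul, hq2sum, one_mul]
  -- Gibbs inequality: ∑ q2 log q2bar ≤ ∑ q2 log q2
  have gibbs : ∑ x, q2 x * Real.log (q2bar x) ≤ ∑ x, q2 x * Real.log (q2 x) := by
    have h : ∀ x ∈ Finset.univ (α := X), q2 x * Real.log (q2bar x)
        ≤ q2 x * Real.log (q2 x) + (q2bar x - q2 x) := by
      intro x _
      have hlog : Real.log (q2bar x) - Real.log (q2 x) ≤ q2bar x / q2 x - 1 := by
        rw [← Real.log_div (hq2barpos x).ne' (hq2pos x).ne']
        exact Real.log_le_sub_one_of_pos (div_pos (hq2barpos x) (hq2pos x))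
      have hmul := mul_le_mul_of_nonneg_left hlog (hq2pos x).le
      have hcancel : q2 x * (q2bar x / q2 x) = q2bar x := by
        rw [mul_comm, div_mul_cancel₀ _ (hq2pos x).ne']
      nlinarith [hmul, hcancel]
    calc ∑ x, q2 x * Real.log (q2bar x)
        ≤ ∑ x, (q2 x * Real.log (q2 x) + (q2bar x - q2 x)) := Finset.sum_le_sum h
      _ = ∑ x, q2 x * Real.log (q2 x) := by
          rw [Finset.sum_add_distrib, Finset.sum_sub_distrib, hq2sum, hq2barsum]; ring
  rw [e1, e2, e3, e4, e3', e4']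
  linarith [gibbs, e5, e6, e7, hH]
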